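/- Let k ≥ 1 and m ≥ 0. The number of sequences a_1, …, a_{k+2m} with each a_i ∈ {+1, −1} such that every proper partial sum a_1 + ⋯ + a_i (for 1 ≤ i < k+2m) is strictly greater than −k and the total sum a_1 + ⋯ + a_{k+2m} equals −k, is (k/(2m+k)) · C(2m+k, m); that is, (2m+k) times this count equals k · C(2m+k, m). -/

import Mathlib

/-- The partial sum `a 0 + a 1 + ⋯ + a i` of the sequence `a`. -/
def partialSum {n : ℕ} (a : Fin n → ℤ) (i : Fin n) : ℤ :=
  ∑ j ∈ Finset.univ.filter (fun j => j ≤ i), a j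

/-- `a : Fin ℓ → ℤ` is a `±1`-sequence whose proper partial sums (over the first
`i` terms, `1 ≤ i < ℓ`) are all strictly greater than `-k` and whose total sum is
`-k`: an outcome path on which the egg supply is first exhausted at the `ℓ`-th drop. -/
def ExhaustedAtEnd (k : ℕ) {ℓ : ℕ} (a : Fin ℓ → ℤ) : Prop :=
  (∀ i, a i = 1 ∨ a i = -1) ∧
  (∀ i : Fin ℓ, (i : ℕ) + 1 < ℓ → -(k : ℤ) < partialSum a i) ∧
  (∑ i, a i) = -(k : ℤ)

lemma partialSum_zero {n : ℕ} (a : Fin (n+1) → ℤ) : partialSum a 0 = a 0 := by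
  unfold partialSum
  have : Finset.univ.filter (fun j => j ≤ (0 : Fin (n+1))) = {0} := by
    ext j; simp [Fin.le_zero_iff]
  rw [this, Finset.sum_singleton]

lemma partialSum_cons_succ {ℓ : ℕ} (x : ℤ) (b : Fin ℓ → ℤ) (i : Fin ℓ) :
    partialSum (Fin.cons x b) i.succ = x + partialSum b i := by
  unfold partialSum
  rw [Finset.sum_filter, Finset.sum_filter, Fin.sum_univ_succ]
  simp [Fin.succ_le_succ_iff]

lemma exh_cons_pos (k : ℕ) {ℓ : ℕ} (b : Fin ℓ → ℤ) :
    ExhaustedAtEnd k (Fin.cons 1 b) ↔ ExhaustedAtEnd (k+1) b := by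
  constructor
  · rintro ⟨h1, h2, h3⟩
    refine ⟨fun i => by simpa using h1 i.succ, fun i hi => ?_, ?_⟩
    · have := h2 i.succ (by simpa using Nat.succ_lt_succ hi)
      rw [partialSum_cons_succ] at this
      push_cast
      omega
    · have : (1 : ℤ) + ∑ i, b i = -(k : ℤ) := by
        rw [← Fin.sum_cons 1 b]; exact h3
      push_cast
      omega
  · rintro ⟨h1, h2, h3⟩
    refine ⟨fun i => ?_, fun i hi => ?_, ?_⟩
    · refine Fin.cases ?_ (fun j => ?_) i <;> simp [h1]
    · refine Fin.cases ?_ (fun j hj => ?_) i hi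
      · rw [partialSum_zero]
        simp only [Fin.cons_zero]
        have : (0 : ℤ) ≤ (k : ℤ) := by positivity
        omega
      · rw [partialSum_cons_succ]
        simp only [Fin.val_succ] at hj
        have := h2 j (by omega)
        push_cast at this ⊢
        omega
    · rw [Fin.sum_cons, h3]; push_cast; ring

lemma exh_cons_neg (k : ℕ) (hk : 2 ≤ k) {ℓ : ℕ} (b : Fin ℓ → ℤ) :
    ExhaustedAtEnd k (Fin.cons (-1) b) ↔ ExhaustedAtEnd (k-1) b := by
  have hc : ((k - 1 : ℕ) : ℤ) = (k : ℤ) - 1 := by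
    have : 1 ≤ k := by omega
    push_cast [this]; ring
  constructor
  · rintro ⟨h1, h2, h3⟩
    refine ⟨fun i => by simpa using h1 i.succ, fun i hi => ?_, ?_⟩
    · have := h2 i.succ (by simpa using Nat.succ_lt_succ hi)
      rw [partialSum_cons_succ] at this
      rw [hc]
      omega
    · have : (-1 : ℤ) + ∑ i, b i = -(k : ℤ) := by
        rw [← Fin.sum_cons (-1) b]; exact h3
      rw [hc]
      omega
  · rintro ⟨h1, h2, h3⟩
    refine ⟨fun i => ?_, fun i hi => ?_, ?_⟩
    · refine Fin.cases ?_ (fun j => ?_) i <;> simp [h1]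
    · refine Fin.cases ?_ (fun j hj => ?_) i hi
      · rw [partialSum_zero]
        simp only [Fin.cons_zero]
        have : (2 : ℤ) ≤ (k : ℤ) := by exact_mod_cast hk
        omega
      · rw [partialSum_cons_succ]
        simp only [Fin.val_succ] at hj
        have := h2 j (by omega)
        rw [hc] at this
        omega
    · rw [Fin.sum_cons, h3, hc]; ring

instance exhFinite (k n : ℕ) : Finite {a : Fin n → ℤ // ExhaustedAtEnd k a} := by
  apply Finite.of_injective (fun a : {a : Fin n → ℤ // ExhaustedAtEnd k a} =>
    (fun i => decide (a.1 i = 1) : Fin n → Bool))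
  intro a b h
  ext i
  have ha := a.2.1 i
  have hb := b.2.1 i
  have := congrFun h i
  simp only [decide_eq_decide] at this
  rcases ha with ha | ha <;> rcases hb with hb | hb <;> simp_all

lemma card_base (k : ℕ) :
    Nat.card {a : Fin k → ℤ // ExhaustedAtEnd k a} = 1 := by
  rw [Nat.card_eq_one_iff_exists]
  refine ⟨⟨fun _ => -1, ?_⟩, ?_⟩
  · refine ⟨fun i => Or.inr rfl, fun i hi => ?_, ?_⟩
    · unfold partialSum
      have : Finset.univ.filter (fun j => j ≤ i) = Finset.Iic i := by ext; simp
      rw [this, Finset.sum_const, Fin.card_Iic, nsmul_eq_mul]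
      have : (i : ℕ) + 1 < k := hi
      push_cast
      omega
    · simp
  · rintro ⟨a, h1, h2, h3⟩
    apply Subtype.ext
    ext i
    simp only
    by_contra hne
    have hai : a i = 1 := by rcases h1 i with h | h; exact h; exact absurd h hne
    have hsum : ∑ j, (a j + 1) = 0 := by
      rw [Finset.sum_add_distrib, h3]
      simp
    have hnn : ∀ j ∈ Finset.univ, (0:ℤ) ≤ a j + 1 := by
      intro j _; rcases h1 j with h | h <;> simp [h]
    have := (Finset.sum_eq_zero_iff_of_nonneg hnn).1 hsum i (Finset.mem_univ i)
    omega

noncomputable def splitEquiv (k ℓ : ℕ) (hk : 2 ≤ k) :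
    {a : Fin (ℓ+1) → ℤ // ExhaustedAtEnd k a} ≃
      {b : Fin ℓ → ℤ // ExhaustedAtEnd (k-1) b} ⊕ {b : Fin ℓ → ℤ // ExhaustedAtEnd (k+1) b} where
  toFun a :=
    if h : a.1 0 = 1 then
      Sum.inr ⟨Fin.tail a.1, by
        rw [← exh_cons_pos]
        have := a.2
        rwa [show Fin.cons 1 (Fin.tail a.1) = a.1 by rw [← h, Fin.cons_self_tail]]⟩
    else
      Sum.inl ⟨Fin.tail a.1, by
        have h' : a.1 0 = -1 := by rcases a.2.1 0 with h' | h'; exact absurd h' h; exact h'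
        rw [← exh_cons_neg k hk]
        have := a.2
        rwa [show Fin.cons (-1) (Fin.tail a.1) = a.1 by rw [← h', Fin.cons_self_tail]]⟩
  invFun b :=
    match b with
    | Sum.inl b => ⟨Fin.cons (-1) b.1, (exh_cons_neg k hk b.1).mpr b.2⟩
    | Sum.inr b => ⟨Fin.cons 1 b.1, (exh_cons_pos k b.1).mpr b.2⟩
  left_inv a := by
    by_cases h : a.1 0 = 1
    · simp only [h, dite_true]
      apply Subtype.ext
      simp only
      rw [← h, Fin.cons_self_tail]
    · simp only [h, dite_false]
      apply Subtype.ext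
      simp only
      have h' : a.1 0 = -1 := by rcases a.2.1 0 with h' | h'; exact absurd h' h; exact h'
      rw [← h', Fin.cons_self_tail]
  right_inv b := by
    match b with
    | Sum.inl b =>
      simp only
      rw [dif_neg (by norm_num)]
      congr 1
    | Sum.inr b =>
      simp only
      rw [dif_pos (by simp)]
      congr 1

lemma card_rec (k ℓ : ℕ) (hk : 2 ≤ k) :
    Nat.card {a : Fin (ℓ+1) → ℤ // ExhaustedAtEnd k a} =
      Nat.card {b : Fin ℓ → ℤ // ExhaustedAtEnd (k-1) b} +
        Nat.card {b : Fin ℓ → ℤ // ExhaustedAtEnd (k+1) b} := by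
  rw [Nat.card_congr (splitEquiv k ℓ hk), Nat.card_sum]

noncomputable def splitEquivOne (ℓ : ℕ) (hl : 1 ≤ ℓ) :
    {a : Fin (ℓ+1) → ℤ // ExhaustedAtEnd 1 a} ≃ {b : Fin ℓ → ℤ // ExhaustedAtEnd 2 b} where
  toFun a := ⟨Fin.tail a.1, by
    have h : a.1 0 = 1 := by
      rcases a.2.1 0 with h | h
      · exact h
      · exfalso
        have := a.2.2.1 0 (by simpa using (show 0 < ℓ by omega))
        rw [partialSum_zero, h] at this
        norm_num at this
    have := a.2
    rw [← exh_cons_pos]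
    rwa [show Fin.cons 1 (Fin.tail a.1) = a.1 by rw [← h, Fin.cons_self_tail]]⟩
  invFun b := ⟨Fin.cons 1 b.1, (exh_cons_pos 1 b.1).mpr b.2⟩
  left_inv a := by
    apply Subtype.ext
    simp only
    have h : a.1 0 = 1 := by
      rcases a.2.1 0 with h | h
      · exact h
      · exfalso
        have := a.2.2.1 0 (by simpa using (show 0 < ℓ by omega))
        rw [partialSum_zero, h] at this
        norm_num at this
    rw [← h, Fin.cons_self_tail]
  right_inv b := by
    apply Subtype.ext
    simp [Fin.tail_cons]

lemma card_rec_one (ℓ : ℕ) (hl : 1 ≤ ℓ) :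
    Nat.card {a : Fin (ℓ+1) → ℤ // ExhaustedAtEnd 1 a} =
      Nat.card {b : Fin ℓ → ℤ // ExhaustedAtEnd 2 b} :=
  Nat.card_congr (splitEquivOne ℓ hl)

lemma card_rec' (j ℓ : ℕ) :
    Nat.card {a : Fin (ℓ+1) → ℤ // ExhaustedAtEnd (j+2) a} =
      Nat.card {b : Fin ℓ → ℤ // ExhaustedAtEnd (j+1) b} +
        Nat.card {b : Fin ℓ → ℤ // ExhaustedAtEnd (j+3) b} := by
  have h := card_rec (j+2) ℓ (by omega)
  simpa using h

lemma main_count : ∀ m : ℕ, ∀ k : ℕ, 1 ≤ k →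
    (2 * m + k) * Nat.card {a : Fin (k + 2 * m) → ℤ // ExhaustedAtEnd k a}
      = k * (2 * m + k).choose m := by
  intro m
  induction m with
  | zero =>
    intro k hk
    rw [show k + 2 * 0 = k by ring, show 2 * 0 + k = k by ring, card_base k,
      Nat.choose_zero_right]
  | succ m ih =>
    intro k
    induction k with
    | zero => omega
    | succ j ihj =>
      intro _
      match j, ihj with
      | 0, _ =>
        -- k = 1
        rw [show 1 + 2 * (m+1) = (2*m+2) + 1 by ring, card_rec_one (2*m+2) (by omega),
          show 2 * (m+1) + 1 = 2*m+3 by ring]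
        have h1 := ih 2 (by omega)
        rw [show 2 + 2*m = 2*m+2 by ring] at h1
        have h1' : (m+1) * Nat.card {b : Fin (2*m+2) → ℤ // ExhaustedAtEnd 2 b}
            = (2*m+2).choose m :=
          Nat.eq_of_mul_eq_mul_left (show 0 < 2 by omega) (by rw [← h1]; ring)
        have A := Nat.add_one_mul_choose_eq (2*m+2) m
        rw [show 2*m+2+1 = 2*m+3 by ring] at A
        apply Nat.eq_of_mul_eq_mul_left (show 0 < m+1 by omega)
        zify at h1' A ⊢
        linear_combination (2*(m:ℤ)+3) * h1' + A
      | (i+1), ihj =>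
        -- k = i + 2
        have hj := ihj (by omega)
        rw [show (i+1) + 2*(m+1) = 2*m+i+3 by ring, show 2*(m+1)+(i+1) = 2*m+i+3 by ring]
          at hj
        have h2 := ih (i+3) (by omega)
        rw [show (i+3) + 2*m = 2*m+i+3 by ring, show 2*m+(i+3) = 2*m+i+3 by ring] at h2
        rw [show (i+2) + 2*(m+1) = (2*m+i+3) + 1 by ring, card_rec' i (2*m+i+3),
          show 2*(m+1)+(i+2) = 2*m+i+4 by ring]
        have A1 := Nat.add_one_mul_choose_eq (2*m+i+3) (m+1)
        have A2 := Nat.choose_succ_right_eq (2*m+i+4) (m+1)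
        have A3 := Nat.add_one_mul_choose_eq (2*m+i+3) m
        rw [show 2*m+i+3+1 = 2*m+i+4 by ring, show m+1+1 = m+2 by ring] at A1
        rw [show m+1+1 = m+2 by ring, show (2:ℕ)*m+i+4 - (m+1) = m+i+3 by omega] at A2
        rw [show 2*m+i+3+1 = 2*m+i+4 by ring] at A3
        apply Nat.eq_of_mul_eq_mul_left (show 0 < 2*m+i+3 by omega)
        zify at hj h2 A1 A2 A3 ⊢
        linear_combination (2*(m:ℤ)+i+4) * hj + (2*(m:ℤ)+i+4) * h2 + ((i:ℤ)+1) * A1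
          + ((i:ℤ)+1) * A2 + ((i:ℤ)+3) * A3

/-- the number of `±1`-sequences of length `k + 2m` whose proper
partial sums all exceed `-k` and whose total sum is `-k` satisfies
`(2m+k) ⬝ count = k ⬝ C(2m+k, m)`, i.e. the count is `(k/(2m+k)) C(2m+k, m)`. -/
theorem first_exhaustion_count (k : ℕ) (hk : 1 ≤ k) (m : ℕ) :
    (2 * m + k) * Nat.card {a : Fin (k + 2 * m) → ℤ // ExhaustedAtEnd k a}
      = k * (2 * m + k).choose m := by
  exact main_count m k hk
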